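/- For any complex number z not on the branch cut, the integral of log Γ satisfies ∫ log Γ(x) dx = z(1-z)/2 + (z/2)·log(2π) + z·log Γ(z) − log G(1+z) + C, i.e. the function z ↦ z(1-z)/2 + (z/2)·log(2π) + z·log Γ(z) − log G(1+z) has derivative log Γ(z), where G is the Barnes G-function. -/

import Mathlib

open Complex

/-- `logBarnesG1p z` is `log G(1+z)` for the Barnes G-function, via its Weierstrass product. -/
noncomputable def logBarnesG1p (z : ℂ) : ℂ :=
  z / 2 * Real.log (2 * Real.pi) - (z + z ^ 2 * (1 + Real.eulerMascheroniConstant)) / 2 +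
    ∑' n : ℕ, (((n : ℂ) + 1) * Complex.log (1 + z / ((n : ℂ) + 1)) + z ^ 2 / (2 * ((n : ℂ) + 1)) - z)

/-- The Barnes G-function (away from its zeros). -/
noncomputable def BarnesG (z : ℂ) : ℂ := Complex.exp (logBarnesG1p (z - 1))

open Filter Finset Topology Nat

noncomputable def γc : ℂ := (Real.eulerMascheroniConstant : ℝ)

lemma ncast_ne (n : ℕ) : ((n:ℂ)+1) ≠ 0 := by
  exact_mod_cast Nat.cast_add_one_ne_zero (R := ℂ) n

lemma norm_ncast (n : ℕ) : ‖((n:ℂ)+1)‖ = (n:ℝ)+1 := by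
  have := Complex.norm_natCast (n+1)
  push_cast at this
  exact this

lemma summable_base : Summable (fun n : ℕ => 1 / ((n:ℝ)+1)^2) := by
  have h : Summable (fun n : ℕ => 1 / ((n:ℝ))^2) := by
    simpa using Real.summable_one_div_nat_pow.mpr (le_refl 2)
  have := (summable_nat_add_iff 1).mpr h
  apply this.congr
  intro n; push_cast; ring

/-- quadratic tail bound for the digamma-log series -/
lemma summable_gl_terms (z : ℂ) :
    Summable (fun n : ℕ => z/((n:ℂ)+1) - Complex.log (1 + z/((n:ℂ)+1))) := by
  apply Summable.of_norm_bounded_eventually (g := fun n : ℕ => ‖z‖^2 * (1 / ((n:ℝ)+1)^2))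
    (summable_base.mul_left _)
  rw [Nat.cofinite_eq_atTop]
  filter_upwards [eventually_ge_atTop ⌈2*‖z‖⌉₊] with n hn
  have hn' : 2*‖z‖ ≤ (n:ℝ) := le_trans (Nat.le_ceil _) (by exact_mod_cast hn)
  set u := z/((n:ℂ)+1) with hu
  have hNpos : (0:ℝ) < (n:ℝ)+1 := by positivity
  have hnu : ‖u‖ = ‖z‖ / ((n:ℝ)+1) := by rw [hu, norm_div, norm_ncast]
  have hu2 : ‖u‖ ≤ 1/2 := by
    rw [hnu, div_le_div_iff₀ hNpos (by norm_num)]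
    nlinarith [norm_nonneg z]
  have hu1 : ‖u‖ < 1 := lt_of_le_of_lt hu2 (by norm_num)
  have hb := Complex.norm_log_one_add_sub_self_le hu1
  have h1 : (1 - ‖u‖)⁻¹ ≤ 2 := by
    rw [inv_le_comm₀ (by linarith) (by norm_num)]
    linarith
  have : ‖z/((n:ℂ)+1) - Complex.log (1 + u)‖ = ‖Complex.log (1+u) - u‖ := by
    rw [hu, ← norm_neg]; congr 1; ring
  rw [this]
  calc ‖Complex.log (1+u) - u‖ ≤ ‖u‖^2 * (1-‖u‖)⁻¹ / 2 := hb
    _ ≤ ‖u‖^2 * 2 / 2 := by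
        apply div_le_div_of_nonneg_right ?_ (by norm_num)
        exact mul_le_mul_of_nonneg_left h1 (by positivity)
    _ = ‖u‖^2 := by ring
    _ ≤ ‖z‖^2 * (1/((n:ℝ)+1)^2) := by
        rw [hnu, div_pow]; ring_nf; rfl

lemma logTaylor_three (u : ℂ) : Complex.logTaylor 3 u = u - u^2/2 := by
  simp [Complex.logTaylor_succ, Complex.logTaylor_zero]
  ring

lemma summable_bg_terms (z : ℂ) :
    Summable (fun n : ℕ =>
      ((n:ℂ)+1) * Complex.log (1 + z/((n:ℂ)+1)) + z^2/(2*((n:ℂ)+1)) - z) := by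
  apply Summable.of_norm_bounded_eventually (g := fun n : ℕ => ‖z‖^3 * (1 / ((n:ℝ)+1)^2))
    ((by
      have h : Summable (fun n : ℕ => 1 / ((n:ℝ))^2) := by
        simpa using Real.summable_one_div_nat_pow.mpr (le_refl 2)
      have := (summable_nat_add_iff 1).mpr h
      apply this.congr
      intro n; push_cast; ring : Summable (fun n : ℕ => 1 / ((n:ℝ)+1)^2)).mul_left _)
  rw [Nat.cofinite_eq_atTop]
  filter_upwards [eventually_ge_atTop ⌈2*‖z‖⌉₊] with n hn
  have hn' : 2*‖z‖ ≤ (n:ℝ) := le_trans (Nat.le_ceil _) (by exact_mod_cast hn)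
  set u := z/((n:ℂ)+1) with hu
  have hNpos : (0:ℝ) < (n:ℝ)+1 := by positivity
  have hN0 : ((n:ℂ)+1) ≠ 0 := by exact_mod_cast Nat.cast_add_one_ne_zero (R := ℂ) n
  have hnu : ‖u‖ = ‖z‖ / ((n:ℝ)+1) := by rw [hu, norm_div, norm_ncast]
  have hu2 : ‖u‖ ≤ 1/2 := by
    rw [hnu, div_le_div_iff₀ hNpos (by norm_num)]
    nlinarith [norm_nonneg z]
  have hu1 : ‖u‖ < 1 := lt_of_le_of_lt hu2 (by norm_num)
  have hb := Complex.norm_log_sub_logTaylor_le 2 hu1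
  rw [logTaylor_three] at hb
  have h1 : (1 - ‖u‖)⁻¹ ≤ 2 := by
    rw [inv_le_comm₀ (by linarith) (by norm_num)]; linarith
  have hterm : ((n:ℂ)+1) * Complex.log (1 + u) + z^2/(2*((n:ℂ)+1)) - z
      = ((n:ℂ)+1) * (Complex.log (1+u) - (u - u^2/2)) := by
    rw [hu]; field_simp; ring
  rw [hterm, norm_mul, norm_ncast]
  calc ((n:ℝ)+1) * ‖Complex.log (1+u) - (u - u^2/2)‖
      ≤ ((n:ℝ)+1) * (‖u‖^(2+1) * (1-‖u‖)⁻¹ / (2+1)) := by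
        apply mul_le_mul_of_nonneg_left ?_ (le_of_lt hNpos)
        exact_mod_cast hb
    _ ≤ ((n:ℝ)+1) * ‖u‖^3 := by
        apply mul_le_mul_of_nonneg_left ?_ (le_of_lt hNpos)
        have h0 : (0:ℝ) ≤ ‖u‖^3 := by positivity
        have hx : ‖u‖^3 * (1-‖u‖)⁻¹ ≤ ‖u‖^3 * 2 := mul_le_mul_of_nonneg_left h1 h0
        have heq : ‖u‖^(2+1) * (1-‖u‖)⁻¹ / (2+1) = ‖u‖^3 * (1-‖u‖)⁻¹/3 := by norm_num
        rw [heq]; linarith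
    _ = ‖z‖^3 * (1/((n:ℝ)+1)^2) := by
        rw [hnu, div_pow]
        field_simp

lemma inv_bound (n : ℕ) {v : ℂ} {R r : ℝ} (hr : 0 < r) (hvR : ‖v‖ ≤ R)
    (hlo : r ≤ ‖(n:ℂ)+1+v‖) :
    ‖(((n:ℂ)+1) * ((n:ℂ)+1+v))⁻¹‖ ≤ (2 + 2*R/r) / ((n:ℝ)+1)^2 := by
  have hR0 : 0 ≤ R := le_trans (norm_nonneg v) hvR
  set N : ℝ := (n:ℝ)+1 with hN
  set a : ℝ := ‖(n:ℂ)+1+v‖ with ha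
  have hNpos : 0 < N := by positivity
  have hapos : 0 < a := lt_of_lt_of_le hr hlo
  have key : N ≤ (2 + 2*R/r) * a := by
    rcases le_or_gt (2*R) N with h | h
    · have htri : N - R ≤ a := by
        have h2 := norm_add_le ((n:ℂ)+1+v) (-v)
        simp only [add_neg_cancel_right, norm_neg] at h2
        rw [norm_ncast] at h2
        rw [ha]; linarith
      have hq : 0 ≤ 2*R/r := by positivity
      nlinarith [mul_nonneg hq hapos.le]
    · have hC : (2 + 2*R/r) * r = 2*r + 2*R := by field_simp
      have : (2 + 2*R/r) * r ≤ (2 + 2*R/r) * a :=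
        mul_le_mul_of_nonneg_left hlo (by positivity)
      linarith
  rw [norm_inv, norm_mul, norm_ncast, ← hN, ← ha]
  rw [inv_eq_one_div, div_le_div_iff₀ (by positivity) (by positivity)]
  nlinarith [mul_le_mul_of_nonneg_left key hNpos.le]

lemma im_one_add_div (n : ℕ) (v : ℂ) : (1 + v/((n:ℂ)+1)).im = v.im / ((n:ℝ)+1) := by
  have hcast : ((n:ℂ)+1) = ((((n:ℝ)+1 : ℝ)) : ℂ) := by push_cast; ring
  rw [hcast, Complex.add_im, Complex.one_im, Complex.div_ofReal_im, zero_add]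

lemma slit_one_add_div (n : ℕ) {v : ℂ} (hv : v.im ≠ 0) :
    (1 + v/((n:ℂ)+1)) ∈ Complex.slitPlane := by
  refine Complex.mem_slitPlane_iff.mpr (Or.inr ?_)
  rw [im_one_add_div]
  exact div_ne_zero hv (by positivity)

lemma nv_ne (n : ℕ) {v : ℂ} (hv : v.im ≠ 0) : ((n:ℂ)+1+v) ≠ 0 := by
  intro h
  have : ((n:ℂ)+1+v).im = 0 := by rw [h]; simp
  simp only [Complex.add_im] at this
  simp at this
  exact hv this

lemma gl_term_hasDerivAt (n : ℕ) {v : ℂ} (hv : v.im ≠ 0) :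
    HasDerivAt (fun w => w/((n:ℂ)+1) - Complex.log (1 + w/((n:ℂ)+1)))
      (v/(((n:ℂ)+1)*((n:ℂ)+1+v))) v := by
  have hN0 : ((n:ℂ)+1) ≠ 0 := by exact_mod_cast Nat.cast_add_one_ne_zero (R := ℂ) n
  have hslit := slit_one_add_div n hv
  have hnz : (1 + v/((n:ℂ)+1)) ≠ 0 := Complex.slitPlane_ne_zero hslit
  have hnv := nv_ne n hv
  have h1 : HasDerivAt (fun w : ℂ => 1 + w/((n:ℂ)+1)) (1/((n:ℂ)+1)) v := by
    simpa using ((hasDerivAt_id v).div_const ((n:ℂ)+1)).const_add 1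
  have hlog : HasDerivAt (fun w => Complex.log (1 + w/((n:ℂ)+1)))
      ((1 + v/((n:ℂ)+1))⁻¹ * (1/((n:ℂ)+1))) v :=
    (Complex.hasDerivAt_log hslit).comp (h := fun w : ℂ => 1 + w/((n:ℂ)+1)) v h1
  have hmain := ((hasDerivAt_id v).div_const ((n:ℂ)+1)).sub hlog
  have hval : 1/((n:ℂ)+1) - (1 + v/((n:ℂ)+1))⁻¹ * (1/((n:ℂ)+1))
      = v/(((n:ℂ)+1)*((n:ℂ)+1+v)) := by
    field_simp
    try (left; first | trivial | ring)
    try ring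
  rw [← hval]
  exact hmain

lemma bg_term_hasDerivAt (n : ℕ) {v : ℂ} (hv : v.im ≠ 0) :
    HasDerivAt (fun w => ((n:ℂ)+1) * Complex.log (1 + w/((n:ℂ)+1)) + w^2/(2*((n:ℂ)+1)) - w)
      (v^2/(((n:ℂ)+1)*((n:ℂ)+1+v))) v := by
  have hN0 : ((n:ℂ)+1) ≠ 0 := by exact_mod_cast Nat.cast_add_one_ne_zero (R := ℂ) n
  have hslit := slit_one_add_div n hv
  have hnz : (1 + v/((n:ℂ)+1)) ≠ 0 := Complex.slitPlane_ne_zero hslit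
  have hnv := nv_ne n hv
  have h1 : HasDerivAt (fun w : ℂ => 1 + w/((n:ℂ)+1)) (1/((n:ℂ)+1)) v := by
    simpa using ((hasDerivAt_id v).div_const ((n:ℂ)+1)).const_add 1
  have hlog : HasDerivAt (fun w => Complex.log (1 + w/((n:ℂ)+1)))
      ((1 + v/((n:ℂ)+1))⁻¹ * (1/((n:ℂ)+1))) v :=
    (Complex.hasDerivAt_log hslit).comp (h := fun w : ℂ => 1 + w/((n:ℂ)+1)) v h1
  have hsq : HasDerivAt (fun w : ℂ => w^2/(2*((n:ℂ)+1))) ((2*v)/(2*((n:ℂ)+1))) v := by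
    have := (hasDerivAt_pow 2 v).div_const (2*((n:ℂ)+1))
    simpa using this
  have hmain := ((hlog.const_mul ((n:ℂ)+1)).add hsq).sub (hasDerivAt_id v)
  have hval : ((n:ℂ)+1) * ((1 + v/((n:ℂ)+1))⁻¹ * (1/((n:ℂ)+1))) + (2*v)/(2*((n:ℂ)+1)) - 1
      = v^2/(((n:ℂ)+1)*((n:ℂ)+1+v)) := by
    field_simp
    try (left; first | trivial | ring)
    try ring
  rw [← hval]
  exact hmain


noncomputable def gl (z : ℂ) : ℂ :=
  -γc*z - Complex.log z + ∑' n : ℕ, (z/((n:ℂ)+1) - Complex.log (1 + z/((n:ℂ)+1)))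

noncomputable def ψa (z : ℂ) : ℂ := -γc - 1/z + ∑' n : ℕ, z/(((n:ℂ)+1)*((n:ℂ)+1+z))


section ball
variable {z : ℂ}

lemma ball_facts (hz : z.im ≠ 0) :
    0 < |z.im|/2 ∧ ∀ v ∈ Metric.ball z (|z.im|/2),
      (v.im ≠ 0 ∧ ‖v‖ ≤ ‖z‖ + |z.im|/2 ∧ ∀ n : ℕ, |z.im|/2 ≤ ‖(n:ℂ)+1+v‖) := by
  have hr : 0 < |z.im|/2 := by positivity
  refine ⟨hr, fun v hv => ?_⟩
  have hd : dist v z < |z.im|/2 := Metric.mem_ball.mp hv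
  have him : |z.im|/2 ≤ |v.im| := by
    have h1 : |z.im - v.im| ≤ ‖z - v‖ := by
      have := Complex.abs_im_le_norm (z - v)
      simpa [Complex.sub_im] using this
    have h2 : ‖z - v‖ = dist v z := by rw [_root_.dist_comm, dist_eq_norm]
    rw [h2] at h1
    have := abs_sub_abs_le_abs_sub z.im v.im
    linarith [abs_sub_comm z.im v.im, le_of_lt hd, abs_nonneg z.im,
      (abs_sub_abs_le_abs_sub z.im v.im)]
  refine ⟨fun h => by simp [h] at him; linarith, ?_, fun n => ?_⟩
  · have : ‖v‖ ≤ ‖z‖ + ‖v - z‖ := by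
      have := norm_add_le z (v - z); simpa using this
    have : ‖v - z‖ < |z.im|/2 := by rwa [← dist_eq_norm]
    linarith [norm_add_le z (v - z), (by simpa using norm_add_le z (v-z) : ‖v‖ ≤ ‖z‖ + ‖v-z‖)]
  · have h1 : |((n:ℂ)+1+v).im| ≤ ‖(n:ℂ)+1+v‖ := by
      simpa using Complex.abs_im_le_norm ((n:ℂ)+1+v)
    have h2 : ((n:ℂ)+1+v).im = v.im := by simp
    rw [h2] at h1
    linarith

lemma hasDerivAt_glsum (hz : z.im ≠ 0) :
    HasDerivAt (fun w => ∑' n : ℕ, (w/((n:ℂ)+1) - Complex.log (1 + w/((n:ℂ)+1))))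
      (∑' n : ℕ, z/(((n:ℂ)+1)*((n:ℂ)+1+z))) z := by
  obtain ⟨hr, hf⟩ := ball_facts hz
  set r := |z.im|/2
  set R := ‖z‖ + r with hR
  have hR0 : 0 < R := by
    have := norm_nonneg z; rw [hR]; positivity
  apply hasDerivAt_tsum_of_isPreconnected
    (u := fun n : ℕ => (R * (2 + 2*R/r)) * (1/((n:ℝ)+1)^2))
    (summable_base.mul_left _) Metric.isOpen_ball (convex_ball z r).isPreconnected
    (fun n v hv => gl_term_hasDerivAt n (hf v hv).1)
    (fun n v hv => ?_) (Metric.mem_ball_self hr) (summable_gl_terms z)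
    (Metric.mem_ball_self hr)
  obtain ⟨hv1, hv2, hv3⟩ := hf v hv
  show ‖v/(((n:ℂ)+1)*((n:ℂ)+1+v))‖ ≤ R * (2 + 2*R/r) * (1/((n:ℝ)+1)^2)
  rw [div_eq_mul_inv, norm_mul]
  have := inv_bound n hr hv2 (hv3 n)
  calc ‖v‖ * ‖(((n:ℂ)+1)*((n:ℂ)+1+v))⁻¹‖
      ≤ R * ((2 + 2*R/r)/((n:ℝ)+1)^2) :=
        mul_le_mul hv2 this (norm_nonneg _) hR0.le
    _ = R * (2 + 2*R/r) * (1/((n:ℝ)+1)^2) := by ring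

lemma hasDerivAt_bgsum (hz : z.im ≠ 0) :
    HasDerivAt (fun w => ∑' n : ℕ,
        (((n:ℂ)+1) * Complex.log (1 + w/((n:ℂ)+1)) + w^2/(2*((n:ℂ)+1)) - w))
      (∑' n : ℕ, z^2/(((n:ℂ)+1)*((n:ℂ)+1+z))) z := by
  obtain ⟨hr, hf⟩ := ball_facts hz
  set r := |z.im|/2
  set R := ‖z‖ + r with hR
  have hR0 : 0 < R := by
    have := norm_nonneg z; rw [hR]; positivity
  apply hasDerivAt_tsum_of_isPreconnected
    (u := fun n : ℕ => (R^2 * (2 + 2*R/r)) * (1/((n:ℝ)+1)^2))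
    (summable_base.mul_left _) Metric.isOpen_ball (convex_ball z r).isPreconnected
    (fun n v hv => bg_term_hasDerivAt n (hf v hv).1)
    (fun n v hv => ?_) (Metric.mem_ball_self hr) (summable_bg_terms z)
    (Metric.mem_ball_self hr)
  obtain ⟨hv1, hv2, hv3⟩ := hf v hv
  show ‖v^2/(((n:ℂ)+1)*((n:ℂ)+1+v))‖ ≤ R^2 * (2 + 2*R/r) * (1/((n:ℝ)+1)^2)
  rw [div_eq_mul_inv, norm_mul]
  have hinv := inv_bound n hr hv2 (hv3 n)
  have hv2' : ‖v^2‖ ≤ R^2 := by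
    rw [norm_pow]
    exact pow_le_pow_left₀ (norm_nonneg v) hv2 2
  calc ‖v^2‖ * ‖(((n:ℂ)+1)*((n:ℂ)+1+v))⁻¹‖
      ≤ R^2 * ((2 + 2*R/r)/((n:ℝ)+1)^2) :=
        mul_le_mul hv2' hinv (norm_nonneg _) (by positivity)
    _ = R^2 * (2 + 2*R/r) * (1/((n:ℝ)+1)^2) := by ring

lemma hasDerivAt_gl (hz : z.im ≠ 0) : HasDerivAt gl (ψa z) z := by
  have hz0 : z ≠ 0 := fun h => hz (by rw [h]; simp)
  have hslit : z ∈ Complex.slitPlane := Complex.mem_slitPlane_iff.mpr (Or.inr hz)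
  have h1 : HasDerivAt (fun w : ℂ => -γc * w) (-γc) z := by
    simpa using (hasDerivAt_id z).const_mul (-γc)
  have h2 := Complex.hasDerivAt_log hslit
  have h3 := hasDerivAt_glsum hz
  have total := (h1.sub h2).add h3
  have hval : -γc - z⁻¹ + (∑' n : ℕ, z/(((n:ℂ)+1)*((n:ℂ)+1+z))) = ψa z := by
    rw [ψa]; ring
  rw [← hval]
  exact total
end ball

lemma exp_gl {z : ℂ} (hz : z.im ≠ 0) : Complex.exp (gl z) = Complex.Gamma z := by
  have hz0 : z ≠ 0 := fun h => hz (by rw [h]; simp)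
  have hnz : ∀ n : ℕ, (1 + z/((n:ℂ)+1)) ≠ 0 :=
    fun n => Complex.slitPlane_ne_zero (slit_one_add_div n hz)
  have hzn : ∀ n : ℕ, ((n:ℂ)+1+z) ≠ 0 := fun n => nv_ne n hz
  set f : ℕ → ℂ := fun n => z/((n:ℂ)+1) - Complex.log (1 + z/((n:ℂ)+1)) with hf
  have hsum := (summable_gl_terms z).hasSum.tendsto_sum_nat
  have hA : Tendsto (fun N => -γc*z - Complex.log z + ∑ n ∈ range N, f n) atTop
      (𝓝 ((-γc*z - Complex.log z) + ∑' n : ℕ, f n)) := tendsto_const_nhds.add hsum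
  have hexpA : Tendsto (fun N => Complex.exp (-γc*z - Complex.log z + ∑ n ∈ range N, f n))
      atTop (𝓝 (Complex.exp (gl z))) := by
    have : Complex.exp (gl z) = Complex.exp ((-γc*z - Complex.log z) + ∑' n : ℕ, f n) := rfl
    rw [this]
    exact (Complex.continuous_exp.continuousAt.tendsto).comp hA
  have key : ∀ N : ℕ, 1 ≤ N →
      Complex.exp (-γc*z - Complex.log z + ∑ n ∈ range N, f n)
        = Complex.exp (((harmonic N : ℂ) - (Real.log N : ℂ) - γc) * z) * Complex.GammaSeq z N := by
    intro N hN
    have hNz : ((N:ℂ)) ≠ 0 := Nat.cast_ne_zero.mpr (by omega)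
    have hprod_ne : (∏ n ∈ range N, ((n:ℂ)+1+z)) ≠ 0 := Finset.prod_ne_zero_iff.mpr
      (fun n _ => hzn n)
    have hhar : ((harmonic N : ℂ)) = ∑ n ∈ range N, (((n:ℂ)+1))⁻¹ := by
      rw [harmonic]
      push_cast
      rfl
    have hsum_split : ∑ n ∈ range N, f n
        = z * (harmonic N : ℂ) - ∑ n ∈ range N, Complex.log (1 + z/((n:ℂ)+1)) := by
      rw [Finset.sum_sub_distrib, hhar, Finset.mul_sum]
      congr 1
    have hexp_logs : Complex.exp (∑ n ∈ range N, Complex.log (1 + z/((n:ℂ)+1)))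
        = ∏ n ∈ range N, (1 + z/((n:ℂ)+1)) := by
      rw [Complex.exp_sum]
      exact Finset.prod_congr rfl fun n _ => Complex.exp_log (hnz n)
    have hfacℕ : ∏ n ∈ range N, (n+1) = N ! := Finset.prod_range_add_one_eq_factorial N
    have hfac : ∏ n ∈ range N, ((n:ℂ)+1) = (N ! : ℂ) := by
      have hc : ((∏ n ∈ range N, (n+1) : ℕ) : ℂ) = ∏ n ∈ range N, ((n:ℂ)+1) := by
        push_cast; rfl
      rw [← hc, hfacℕ]
    have hfac_ne : ((N ! : ℂ)) ≠ 0 := Nat.cast_ne_zero.mpr (Nat.factorial_ne_zero N)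
    have hprod_eq : ∏ n ∈ range N, (1 + z/((n:ℂ)+1))
        = (∏ n ∈ range N, ((n:ℂ)+1+z)) / (N ! : ℂ) := by
      rw [← hfac, ← Finset.prod_div_distrib]
      refine Finset.prod_congr rfl fun n _ => ?_
      field_simp [ncast_ne n]
      try ring
    have hrange : ∏ j ∈ range (N+1), (z + (j:ℂ)) = z * ∏ n ∈ range N, ((n:ℂ)+1+z) := by
      rw [Finset.prod_range_succ']
      simp only [Nat.cast_add, Nat.cast_one, Nat.cast_zero, add_zero]
      rw [mul_comm]
      congr 1
      exact Finset.prod_congr rfl fun i _ => by ring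
    rw [hsum_split]
    have hexp : -γc*z - Complex.log z + (z * (harmonic N : ℂ)
          - ∑ n ∈ range N, Complex.log (1 + z/((n:ℂ)+1)))
        = (((harmonic N : ℂ) - (Real.log N : ℂ) - γc) * z) + ((Real.log N : ℂ)*z)
          + (-(Complex.log z)) + (-(∑ n ∈ range N, Complex.log (1 + z/((n:ℂ)+1)))) := by
      ring
    rw [hexp, Complex.exp_add, Complex.exp_add, Complex.exp_add, Complex.exp_neg,
      Complex.exp_neg, Complex.exp_log hz0, hexp_logs, hprod_eq,
      Complex.GammaSeq, hrange, Complex.cpow_def_of_ne_zero hNz, ← Complex.natCast_log]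
    field_simp
  have hH : Tendsto (fun N : ℕ => ((harmonic N : ℂ) - (Real.log N : ℂ) - γc)) atTop (𝓝 0) := by
    have h1 := Real.tendsto_harmonic_sub_log
    have h2 : Tendsto (fun n : ℕ => ((((harmonic n : ℝ)) - Real.log n : ℝ) : ℂ)) atTop
        (𝓝 ((Real.eulerMascheroniConstant : ℝ) : ℂ)) :=
      (Complex.continuous_ofReal.continuousAt.tendsto).comp h1
    have h3 := h2.sub (tendsto_const_nhds (x := γc))
    have h4 : ∀ N : ℕ, ((((harmonic N : ℝ) - Real.log N : ℝ)) : ℂ) - γc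
        = (harmonic N : ℂ) - (Real.log N : ℂ) - γc := by
      intro N; push_cast; ring
    have h5 : ((Real.eulerMascheroniConstant:ℝ):ℂ) - γc = 0 := by rw [γc, sub_self]
    rw [h5] at h3
    exact h3.congr h4
  have hE : Tendsto (fun N : ℕ =>
      Complex.exp (((harmonic N : ℂ) - (Real.log N : ℂ) - γc) * z)) atTop (𝓝 1) := by
    have h1 : Tendsto (fun N : ℕ => ((harmonic N : ℂ) - (Real.log N : ℂ) - γc) * z) atTop
        (𝓝 0) := by simpa using hH.mul_const z
    have h2 := (Complex.continuous_exp.tendsto 0).comp h1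
    simpa [Function.comp_def] using h2
  have hRHS : Tendsto (fun N : ℕ =>
      Complex.exp (((harmonic N : ℂ) - (Real.log N : ℂ) - γc) * z) * Complex.GammaSeq z N)
      atTop (𝓝 (Complex.Gamma z)) := by
    simpa using hE.mul (Complex.GammaSeq_tendsto_Gamma z)
  have hev : (fun N : ℕ => Complex.exp (-γc*z - Complex.log z + ∑ n ∈ range N, f n))
      =ᶠ[atTop] (fun N : ℕ =>
        Complex.exp (((harmonic N : ℂ) - (Real.log N : ℂ) - γc) * z) * Complex.GammaSeq z N) := by
    filter_upwards [eventually_ge_atTop 1] with N hN using key N hN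
  exact tendsto_nhds_unique (hexpA.congr' hev) hRHS

lemma hasDerivAt_Gamma_psi {z : ℂ} (hz : z.im ≠ 0) :
    HasDerivAt Complex.Gamma (Complex.Gamma z * ψa z) z := by
  have h1 : HasDerivAt (fun w => Complex.exp (gl w)) (Complex.exp (gl z) * ψa z) z :=
    (hasDerivAt_gl hz).cexp
  have hopen : IsOpen {w : ℂ | w.im ≠ 0} := isOpen_ne.preimage Complex.continuous_im
  have hev : Complex.Gamma =ᶠ[𝓝 z] (fun w => Complex.exp (gl w)) := by
    filter_upwards [hopen.mem_nhds hz] with w hw using (exp_gl hw).symm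
  have h2 := h1.congr_of_eventuallyEq hev
  rwa [exp_gl hz] at h2

lemma hasDerivAt_logBarnesG1p {z : ℂ} (hz : z.im ≠ 0) :
    HasDerivAt logBarnesG1p
      ((Real.log (2*Real.pi) : ℂ)/2 + 1/2 - z + z * ψa z) z := by
  have hz0 : z ≠ 0 := fun h => hz (by rw [h]; simp)
  have h1 : HasDerivAt (fun w : ℂ => w / 2 * (Real.log (2*Real.pi) : ℂ))
      ((Real.log (2*Real.pi) : ℂ)/2) z := by
    have := ((hasDerivAt_id z).div_const 2).mul_const ((Real.log (2*Real.pi) : ℂ))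
    refine this.congr_deriv ?_
    ring
  have h2 : HasDerivAt (fun w : ℂ => (w + w^2*(1 + (Real.eulerMascheroniConstant:ℂ)))/2)
      ((1 + 2*z*(1 + (Real.eulerMascheroniConstant:ℂ)))/2) z := by
    have := ((hasDerivAt_id z).add
      ((hasDerivAt_pow 2 z).mul_const (1 + (Real.eulerMascheroniConstant:ℂ)))).div_const 2
    refine this.congr_deriv ?_
    ring
  have h3 := hasDerivAt_bgsum hz
  have total := (h1.sub h2).add h3
  have hts : ∑' n : ℕ, z^2/(((n:ℂ)+1)*((n:ℂ)+1+z)) = z * (ψa z + γc + 1/z) := by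
    have h0 : ∀ n : ℕ, z^2/(((n:ℂ)+1)*((n:ℂ)+1+z)) = z * (z/(((n:ℂ)+1)*((n:ℂ)+1+z))) :=
      fun n => by ring
    rw [tsum_congr h0, tsum_mul_left]
    rw [ψa]
    ring
  have hval : (Real.log (2*Real.pi) : ℂ)/2 - (1 + 2*z*(1 + (Real.eulerMascheroniConstant:ℂ)))/2
        + ∑' n : ℕ, z^2/(((n:ℂ)+1)*((n:ℂ)+1+z))
      = (Real.log (2*Real.pi) : ℂ)/2 + 1/2 - z + z * ψa z := by
    rw [hts, γc]
    field_simp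
    ring
  rw [← hval]
  exact total

theorem alexeiewsky (s : Set ℂ) (hs : IsOpen s) (logΓ logG1p : ℂ → ℂ)
    (hΓ : ∀ w ∈ s, Complex.exp (logΓ w) = Complex.Gamma w)
    (hG : ∀ w ∈ s, Complex.exp (logG1p w) = BarnesG (1 + w))
    (hΓd : DifferentiableOn ℂ logΓ s) (hGd : DifferentiableOn ℂ logG1p s)
    (z : ℂ) (hz : z ∈ s) :
    HasDerivAt (fun w => w * (1 - w) / 2 + w / 2 * Real.log (2 * Real.pi)
        + w * logΓ w - logG1p w) (logΓ z) z := by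
  set L : ℂ := ((Real.log (2*Real.pi) : ℝ) : ℂ) with hL
  have hsnz : s ∈ 𝓝 z := hs.mem_nhds hz
  have hΓz : HasDerivAt logΓ (deriv logΓ z) z := (hΓd.differentiableAt hsnz).hasDerivAt
  have hGz : HasDerivAt logG1p (deriv logG1p z) z := (hGd.differentiableAt hsnz).hasDerivAt
  have key : ∀ w ∈ s, w.im ≠ 0 → deriv logG1p w = L/2 + 1/2 - w + w * deriv logΓ w := by
    intro w hw hwim
    have hsnw : s ∈ 𝓝 w := hs.mem_nhds hw
    have hdΓ : HasDerivAt logΓ (deriv logΓ w) w := (hΓd.differentiableAt hsnw).hasDerivAt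
    have hdG : HasDerivAt logG1p (deriv logG1p w) w := (hGd.differentiableAt hsnw).hasDerivAt
    have hΓexp : HasDerivAt (fun v => Complex.exp (logΓ v))
        (Complex.exp (logΓ w) * deriv logΓ w) w := hdΓ.cexp
    have hevΓ : Complex.Gamma =ᶠ[𝓝 w] (fun v => Complex.exp (logΓ v)) := by
      filter_upwards [hsnw] with v hv using (hΓ v hv).symm
    have hΓ1 : HasDerivAt Complex.Gamma (Complex.exp (logΓ w) * deriv logΓ w) w :=
      hΓexp.congr_of_eventuallyEq hevΓ
    have hGamma_ne : Complex.Gamma w ≠ 0 := by rw [← hΓ w hw]; exact Complex.exp_ne_zero _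
    have hψ : deriv logΓ w = ψa w := by
      have h := hΓ1.unique (hasDerivAt_Gamma_psi hwim)
      rw [hΓ w hw] at h
      exact mul_left_cancel₀ hGamma_ne h
    have hGexp : HasDerivAt (fun v => Complex.exp (logG1p v))
        (Complex.exp (logG1p w) * deriv logG1p w) w := hdG.cexp
    have hBexp : HasDerivAt (fun v => Complex.exp (logBarnesG1p v))
        (Complex.exp (logBarnesG1p w) * (L/2 + 1/2 - w + w * ψa w)) w :=
      (hasDerivAt_logBarnesG1p hwim).cexp
    have hevG : (fun v => Complex.exp (logG1p v)) =ᶠ[𝓝 w]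
        (fun v => Complex.exp (logBarnesG1p v)) := by
      filter_upwards [hsnw] with v hv
      rw [hG v hv, BarnesG, add_sub_cancel_left]
    have hB2 : HasDerivAt (fun v => Complex.exp (logG1p v))
        (Complex.exp (logBarnesG1p w) * (L/2 + 1/2 - w + w * ψa w)) w :=
      hBexp.congr_of_eventuallyEq hevG
    have hexp_eq : Complex.exp (logG1p w) = Complex.exp (logBarnesG1p w) := by
      rw [hG w hw, BarnesG, add_sub_cancel_left]
    have huniq := hGexp.unique hB2
    rw [← hexp_eq] at huniq
    have hD := mul_left_cancel₀ (Complex.exp_ne_zero (logG1p w)) huniq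
    rw [hD, hψ]
  have hkeyz : deriv logG1p z = L/2 + 1/2 - z + z * deriv logΓ z := by
    rcases ne_or_eq z.im 0 with him | him
    · exact key z hz him
    · have haΓ : AnalyticOnNhd ℂ logΓ s := hΓd.analyticOnNhd hs
      have haG : AnalyticOnNhd ℂ logG1p s := hGd.analyticOnNhd hs
      have hcΓ : ContinuousAt (deriv logΓ) z := ((haΓ.deriv) z hz).continuousAt
      have hcG : ContinuousAt (deriv logG1p) z := ((haG.deriv) z hz).continuousAt
      set T : Set ℂ := {v | v.im ≠ 0} ∩ s with hT
      have hclo : z ∈ closure T := by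
        rw [Metric.mem_closure_iff]
        intro ε hε
        obtain ⟨δ, hδ, hball⟩ := Metric.isOpen_iff.mp hs z hz
        have hm : 0 < min ε δ / 2 := by positivity
        refine ⟨z + (↑(min ε δ / 2) : ℂ) * Complex.I, ⟨?_, ?_⟩, ?_⟩
        · show (z + (↑(min ε δ / 2) : ℂ) * Complex.I).im ≠ 0
          simp [Complex.add_im, him]
          positivity
        · apply hball
          rw [Metric.mem_ball]
          have : dist (z + (↑(min ε δ / 2) : ℂ) * Complex.I) z = min ε δ / 2 := by
            rw [dist_eq_norm]
            simp
            exact ⟨hε.le, hδ.le⟩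
          rw [this]
          calc min ε δ / 2 < min ε δ := by linarith
            _ ≤ δ := min_le_right _ _
        · have : dist (z + (↑(min ε δ / 2) : ℂ) * Complex.I) z = min ε δ / 2 := by
            rw [dist_eq_norm]
            simp
            exact ⟨hε.le, hδ.le⟩
          rw [_root_.dist_comm, this]
          calc min ε δ / 2 < min ε δ := by linarith
            _ ≤ ε := min_le_left _ _
      haveI : (𝓝[T] z).NeBot := mem_closure_iff_nhdsWithin_neBot.mp hclo
      have h1 : Tendsto (deriv logG1p) (𝓝[T] z) (𝓝 (deriv logG1p z)) :=
        hcG.continuousWithinAt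
      have h2 : Tendsto (fun w => L/2 + 1/2 - w + w * deriv logΓ w) (𝓝[T] z)
          (𝓝 (L/2 + 1/2 - z + z * deriv logΓ z)) := by
        apply ContinuousAt.continuousWithinAt
        exact ((continuousAt_const.sub continuousAt_id).add (continuousAt_id.mul hcΓ))
      have h1' : Tendsto (deriv logG1p) (𝓝[T] z)
          (𝓝 (L/2 + 1/2 - z + z * deriv logΓ z)) := by
        refine h2.congr' ?_
        filter_upwards [self_mem_nhdsWithin] with w hw
        exact (key w hw.2 hw.1).symm
      exact tendsto_nhds_unique h1 h1'
  have hda : HasDerivAt (fun w : ℂ => w * (1 - w) / 2) ((1 - 2*z)/2) z := by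
    have h := ((hasDerivAt_id z).mul ((hasDerivAt_id z).const_sub 1)).div_const 2
    refine h.congr_deriv ?_
    simp only [id]
    ring
  have hdb : HasDerivAt (fun w : ℂ => w / 2 * (Real.log (2*Real.pi) : ℂ)) (L/2) z := by
    have h := ((hasDerivAt_id z).div_const 2).mul_const ((Real.log (2*Real.pi) : ℂ))
    refine h.congr_deriv ?_
    rw [hL]
    ring
  have hdc : HasDerivAt (fun w => w * logΓ w) (logΓ z + z * deriv logΓ z) z := by
    have h := (hasDerivAt_id z).mul hΓz
    refine h.congr_deriv ?_
    simp only [id]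
    ring
  have hGz' : HasDerivAt logG1p (L/2 + 1/2 - z + z * deriv logΓ z) z := hkeyz ▸ hGz
  have final := ((hda.add hdb).add hdc).sub hGz'
  refine final.congr_deriv ?_
  rw [hL]
  ring
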